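/- Point identification under a valid instrument: let H be a real Hilbert space, X a complete subspace, and y, d, z, u ∈ H with all residuals appearing below nonzero, ⟨d^{⊥X}, z^{⊥X}⟩ ≠ 0 (equivalently R_{d∼z|X} ≠ 0). If R_{z∼u|X} = 0 (exogeneity) and R_{y∼z|X+span(u)+span(d)} = 0 (exclusion restriction), then f_{d∼u|X+span(z)}·R_{y∼u|X+span(z)+span(d)} = −f_{y∼z|X+span(d)}/R_{d∼z|X}, and consequently β_{y∼d|X+span(z)+span(u)} = ⟨y^{⊥X}, z^{⊥X}⟩/⟨d^{⊥X}, z^{⊥X}⟩, i.e. the causal effect equals the TSLS estimand. -/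

import Mathlib

/-!
R²-calculus in real Hilbert spaces (Freidling & Zhao, "Optimization-based
Sensitivity Analysis for Unmeasured Confounding using Partial Correlations").
-/

noncomputable section

open Submodule RealInnerProductSpace

variable {H : Type*} [NormedAddCommGroup H] [InnerProductSpace ℝ H]

/-- The residual `h^{⊥M} = h − P_M h` of `h` after projecting onto `M`. -/
def resid (M : Submodule ℝ H) [HasOrthogonalProjection M] (h : H) : H :=
  h - (orthogonalProjection M h : H)

/-- The marginal R²-value `R²_{y∼X} = 1 − ‖y^{⊥X}‖²/‖y‖²`. -/
def R2 (y : H) (X : Submodule ℝ H) [HasOrthogonalProjection X] : ℝ :=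
  1 - ‖resid X y‖ ^ 2 / ‖y‖ ^ 2

/-- The partial R²-value `R²_{y∼X|Z} = (R²_{y∼X+Z} − R²_{y∼Z})/(1 − R²_{y∼Z})`. -/
def R2p (y : H) (X Z : Submodule ℝ H) [HasOrthogonalProjection (X ⊔ Z)]
    [HasOrthogonalProjection Z] : ℝ :=
  (R2 y (X ⊔ Z) - R2 y Z) / (1 - R2 y Z)

/-- The partial R-value `R_{y∼x|Z} = ⟪y^{⊥Z}, x^{⊥Z}⟫/(‖y^{⊥Z}‖·‖x^{⊥Z}‖)`. -/
def Rp (y x : H) (Z : Submodule ℝ H) [HasOrthogonalProjection Z] : ℝ :=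
  ⟪resid Z y, resid Z x⟫ / (‖resid Z y‖ * ‖resid Z x‖)

/-- The partial f-value `f_{y∼x|Z} = R_{y∼x|Z}/√(1 − R²_{y∼x|Z})`. -/
def fp (y x : H) (Z : Submodule ℝ H) [HasOrthogonalProjection Z] : ℝ :=
  Rp y x Z / Real.sqrt (1 - Rp y x Z ^ 2)

/-- The regression estimand `β_{y∼d|M} = ⟪y^{⊥M}, d^{⊥M}⟫/‖d^{⊥M}‖²`. -/
def betaReg (y d : H) (M : Submodule ℝ H) [HasOrthogonalProjection M] : ℝ :=
  ⟪resid M y, resid M d⟫ / ‖resid M d‖ ^ 2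

/-- `σ_{y∼M} = ‖y^{⊥M}‖`. -/
def sigv (y : H) (M : Submodule ℝ H) [HasOrthogonalProjection M] : ℝ :=
  ‖resid M y‖

/- ------------------------------------------------------------------ -/
/- Auxiliary lemmas                                                    -/
/- ------------------------------------------------------------------ -/

lemma resid_mem_orthogonal (M : Submodule ℝ H) [HasOrthogonalProjection M] (h : H) :
    resid M h ∈ Mᗮ := sub_starProjection_mem_orthogonal h

lemma resid_inner_mem (M : Submodule ℝ H) [HasOrthogonalProjection M] (y : H) {w : H}
    (hw : w ∈ M) : ⟪resid M y, w⟫ = 0 := by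
  rw [real_inner_comm]; exact resid_mem_orthogonal M y w hw

lemma resid_congr {M N : Submodule ℝ H} [HasOrthogonalProjection M] [HasOrthogonalProjection N]
    (h : M = N) (x : H) : resid M x = resid N x := by subst h; rfl

lemma resid_eq_zero_mono {M N : Submodule ℝ H} [HasOrthogonalProjection M]
    [HasOrthogonalProjection N] (hMN : M ≤ N) {h : H} (h0 : resid M h = 0) :
    resid N h = 0 := by
  have hm : h ∈ M := by
    have h1 : h = (orthogonalProjection M h : H) := sub_eq_zero.1 h0
    rw [h1]; exact (orthogonalProjection M h).2
  have h2 : (orthogonalProjection N h : H) = h := starProjection_eq_self_iff.2 (hMN hm)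
  simp [resid, h2]

lemma resid_sup_span (M : Submodule ℝ H) [HasOrthogonalProjection M] (v : H)
    [HasOrthogonalProjection (M ⊔ (ℝ ∙ v))] (hv : resid M v ≠ 0) (h : H) :
    resid (M ⊔ (ℝ ∙ v)) h =
      resid M h - (⟪resid M h, resid M v⟫ / ‖resid M v‖ ^ 2) • resid M v := by
  set c : ℝ := ⟪resid M h, resid M v⟫ / ‖resid M v‖ ^ 2 with hc
  set r : H := resid M h - c • resid M v with hr
  have hmem : h - r ∈ M ⊔ (ℝ ∙ v) := by
    have he : h - r = ((orthogonalProjection M h : H) - c • (orthogonalProjection M v : H))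
        + c • v := by
      simp only [hr, resid, smul_sub]; abel
    rw [he]
    exact add_mem (mem_sup_left (sub_mem (orthogonalProjection M h).2
      (Submodule.smul_mem _ _ (orthogonalProjection M v).2)))
      (mem_sup_right (Submodule.smul_mem _ _ (Submodule.mem_span_singleton_self v)))
  have h2 : ⟪r, v⟫ = 0 := by
    have hv' : ⟪r, v⟫ = ⟪r, resid M v⟫ := by
      have hz : ⟪r, (orthogonalProjection M v : H)⟫ = 0 := by
        rw [hr, inner_sub_left, inner_smul_left,
          resid_inner_mem M h (orthogonalProjection M v).2,
          resid_inner_mem M v (orthogonalProjection M v).2]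
        simp
      rw [resid, inner_sub_right, hz]; simp
    rw [hv', hr, inner_sub_left, inner_smul_left, real_inner_self_eq_norm_sq]
    have hvn : ‖resid M v‖ ≠ 0 := norm_ne_zero_iff.2 hv
    simp only [RCLike.star_def, conj_trivial, hc]
    field_simp
    ring
  have horth : r ∈ (M ⊔ (ℝ ∙ v))ᗮ := by
    rw [Submodule.mem_orthogonal]
    intro w hw
    rw [Submodule.mem_sup] at hw
    obtain ⟨m, hm, s, hs, rfl⟩ := hw
    obtain ⟨t, rfl⟩ := Submodule.mem_span_singleton.1 hs
    have h1 : ⟪r, m⟫ = 0 := by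
      rw [hr, inner_sub_left, inner_smul_left, resid_inner_mem M h hm, resid_inner_mem M v hm]
      simp
    rw [real_inner_comm, inner_add_right, inner_smul_right, h1, h2]
    simp
  have hfin : ((M ⊔ (ℝ ∙ v)).orthogonalProjection h : H) = h - r :=
    eq_starProjection_of_mem_orthogonal (K := M ⊔ (ℝ ∙ v)) (u := h) hmem
    (by simpa using horth)
  simp only [resid, hfin, hr, resid]
  abel

lemma inner_proj_sub (p q w : H) (hw : w ≠ 0) :
    ⟪p - (⟪p, w⟫ / ‖w‖ ^ 2) • w, q - (⟪q, w⟫ / ‖w‖ ^ 2) • w⟫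
      = ⟪p, q⟫ - ⟪p, w⟫ * ⟪q, w⟫ / ‖w‖ ^ 2 := by
  have hw2 : ‖w‖ ^ 2 ≠ 0 := pow_ne_zero _ (norm_ne_zero_iff.2 hw)
  simp only [inner_sub_left, inner_sub_right, inner_smul_left, inner_smul_right,
    RCLike.star_def, conj_trivial, real_inner_self_eq_norm_sq]
  rw [real_inner_comm q p, real_inner_comm w p, real_inner_comm w q]
  field_simp
  ring

lemma Rp_comm (y x : H) (Z : Submodule ℝ H) [HasOrthogonalProjection Z] :
    Rp y x Z = Rp x y Z := by
  rw [Rp, Rp, real_inner_comm, mul_comm]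

lemma fp_eq (y x : H) (Z : Submodule ℝ H) [HasOrthogonalProjection Z]
    [HasOrthogonalProjection (Z ⊔ (ℝ ∙ y))]
    (hy : resid Z y ≠ 0) (hx : resid Z x ≠ 0) (hx2 : resid (Z ⊔ (ℝ ∙ y)) x ≠ 0) :
    fp y x Z = ⟪resid Z y, resid Z x⟫ / (‖resid Z y‖ * ‖resid (Z ⊔ (ℝ ∙ y)) x‖) := by
  have hq' : resid (Z ⊔ (ℝ ∙ y)) x
      = resid Z x - (⟪resid Z x, resid Z y⟫ / ‖resid Z y‖ ^ 2) • resid Z y :=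
    resid_sup_span Z y hy x
  have hp : (0:ℝ) < ‖resid Z y‖ := norm_pos_iff.2 hy
  have hq : (0:ℝ) < ‖resid Z x‖ := norm_pos_iff.2 hx
  have hq2 : (0:ℝ) < ‖resid (Z ⊔ (ℝ ∙ y)) x‖ := norm_pos_iff.2 hx2
  have hnorm : ‖resid (Z ⊔ (ℝ ∙ y)) x‖ ^ 2
      = ‖resid Z x‖ ^ 2 - ⟪resid Z x, resid Z y⟫ ^ 2 / ‖resid Z y‖ ^ 2 := by
    rw [← real_inner_self_eq_norm_sq, hq',
      inner_proj_sub (resid Z x) (resid Z x) (resid Z y) hy,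
      real_inner_self_eq_norm_sq, ← pow_two]
  have h1R : 1 - Rp y x Z ^ 2 = (‖resid (Z ⊔ (ℝ ∙ y)) x‖ / ‖resid Z x‖) ^ 2 := by
    rw [Rp, div_pow, div_pow, hnorm, mul_pow, real_inner_comm (resid Z y)]
    field_simp
  rw [fp, h1R, Real.sqrt_sq (by positivity), Rp, div_div_div_eq,
    div_eq_div_iff (by positivity) (by positivity)]
  ring

lemma alg_excl (AB AC AE BB BC BE EE : ℝ) (hBB : 0 < BB)
    (hu3 : EE - BE ^ 2 / BB ≠ 0)
    (hEX : (AC - AB * BC / BB) - (AE - AB * BE / BB) * (-(BC * BE / BB)) / (EE - BE ^ 2 / BB)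
      = 0) :
    AC * (BB * EE - BE ^ 2) = BC * (AB * EE - AE * BE) := by
  have hBB' : BB ≠ 0 := ne_of_gt hBB
  have h2 : BB * EE - BE ^ 2 ≠ 0 := by
    intro h; apply hu3; field_simp; linarith
  rw [sub_eq_zero, eq_div_iff hu3] at hEX
  field_simp at hEX
  have h4 : BB * (AC * (BB * EE - BE ^ 2)) = BB * (BC * (AB * EE - AE * BE)) := by
    linear_combination hEX
  exact mul_left_cancel₀ hBB' h4

lemma alg2 (AB AC AE BB BC BE CC EE : ℝ) (hCC : 0 < CC) (hEE : 0 < EE)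
    (hBC : BC ≠ 0) (hden : BB - BC ^ 2 / CC - BE ^ 2 / EE ≠ 0)
    (hEX : AC * (BB * EE - BE ^ 2) = BC * (AB * EE - AE * BE)) :
    (AB - AC * BC / CC - AE * BE / EE) / (BB - BC ^ 2 / CC - BE ^ 2 / EE) = AC / BC := by
  rw [div_eq_div_iff hden hBC]
  field_simp
  linear_combination (-CC) * hEX

lemma alg1 (AB AC AE BB BC BE CC EE nb nc nd nz nu ny G : ℝ)
    (hnb : 0 < nb) (hnc : 0 < nc) (hnd : 0 < nd) (hnz : 0 < nz) (hnu : 0 < nu) (hny : 0 < ny)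
    (hbb : nb ^ 2 = BB) (hcc : nc ^ 2 = CC) (hEE : 0 < EE)
    (hnd2 : nd ^ 2 = BB - BC ^ 2 / CC) (hnz2 : nz ^ 2 = CC - BC ^ 2 / BB)
    (hnu2 : nu ^ 2 = EE - BE ^ 2 / (BB - BC ^ 2 / CC))
    (hBC : BC ≠ 0)
    (hG : G = AE - (AB - AC * BC / CC) * BE / (BB - BC ^ 2 / CC))
    (hEX : AC * (BB * EE - BE ^ 2) = BC * (AB * EE - AE * BE)) :
    BE / (nd * nu) * (G / (ny * nu))
      = -((AC - AB * BC / BB) / (nz * ny) / (BC / (nb * nc))) := by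
  have hBB : 0 < BB := hbb ▸ pow_pos hnb 2
  have hCC : 0 < CC := hcc ▸ pow_pos hnc 2
  have hB : 0 < BB - BC ^ 2 / CC := hnd2 ▸ pow_pos hnd 2
  have hzz : 0 < CC - BC ^ 2 / BB := hnz2 ▸ pow_pos hnz 2
  have huu : 0 < EE - BE ^ 2 / (BB - BC ^ 2 / CC) := hnu2 ▸ pow_pos hnu 2
  have hD : 0 < BB * CC - BC ^ 2 := by
    have h : BB * CC - BC ^ 2 = (BB - BC ^ 2 / CC) * CC := by field_simp
    rw [h]; exact mul_pos hB hCC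
  have hE1 : 0 < BB * EE - BE ^ 2 := by
    have h6 : (BB - BC ^ 2 / CC) * (EE - BE ^ 2 / (BB - BC ^ 2 / CC))
        = (BB - BC ^ 2 / CC) * EE - BE ^ 2 := by
      field_simp
    have h5 : 0 < (BB - BC ^ 2 / CC) * EE - BE ^ 2 := h6 ▸ mul_pos hB huu
    nlinarith [div_nonneg (sq_nonneg BC) hCC.le, hEE]
  have hAC : AC = BC * (AB * EE - AE * BE) / (BB * EE - BE ^ 2) := by
    rw [eq_div_iff hE1.ne']; linear_combination hEX
  have hprod : nd * nz = (BB * CC - BC ^ 2) / (nb * nc) := by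
    have hsq : (nd * nz) * (nd * nz)
        = ((BB * CC - BC ^ 2) / (nb * nc)) * ((BB * CC - BC ^ 2) / (nb * nc)) := by
      have h7 : (nd * nz) * (nd * nz) = nd ^ 2 * nz ^ 2 := by ring
      rw [h7, hnd2, hnz2, div_mul_div_comm, ← hbb, ← hcc]
      field_simp
    rcases mul_self_eq_mul_self_iff.1 hsq with h | h
    · exact h
    · exfalso
      have h1 : 0 < nd * nz := mul_pos hnd hnz
      have h2 : 0 < (BB * CC - BC ^ 2) / (nb * nc) := div_pos hD (mul_pos hnb hnc)
      linarith
  have hnd_eq : nd = (BB * CC - BC ^ 2) / (nb * nc * nz) := by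
    rw [eq_div_iff (by positivity)]
    calc nd * (nb * nc * nz) = (nd * nz) * (nb * nc) := by ring
    _ = (BB * CC - BC ^ 2) / (nb * nc) * (nb * nc) := by rw [hprod]
    _ = BB * CC - BC ^ 2 := div_mul_cancel₀ _ (by positivity)
  have key : BE * G * nz ^ 2 / ((BB * CC - BC ^ 2) * nu ^ 2) = -((AC - AB * BC / BB) / BC) := by
    have hden1 : (BB * CC - BC ^ 2) * (EE - BE ^ 2 / (BB - BC ^ 2 / CC)) ≠ 0 :=
      (mul_pos hD huu).ne'
    have : EE * BB - BE ^ 2 ≠ 0 := by linarith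
    rw [hG, hnz2, hnu2, hAC, ← neg_div, div_eq_div_iff hden1 hBC]
    field_simp
    ring
  calc BE / (nd * nu) * (G / (ny * nu))
      = (BE * G * nz ^ 2 / ((BB * CC - BC ^ 2) * nu ^ 2)) * (nb * nc / (nz * ny)) := by
        rw [hnd_eq]; field_simp
    _ = -((AC - AB * BC / BB) / BC) * (nb * nc / (nz * ny)) := by rw [key]
    _ = -((AC - AB * BC / BB) / (nz * ny) / (BC / (nb * nc))) := by field_simp

/-- point identification under a valid instrument. -/
theorem point_identification_valid_iv [CompleteSpace H]
    (X : Submodule ℝ H) [CompleteSpace X] (y d z u : H)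
    [CompleteSpace ↥(X ⊔ (ℝ ∙ z))] [CompleteSpace ↥(X ⊔ (ℝ ∙ d))]
    [CompleteSpace ↥(X ⊔ (ℝ ∙ z) ⊔ (ℝ ∙ d))] [CompleteSpace ↥(X ⊔ (ℝ ∙ u) ⊔ (ℝ ∙ d))]
    [CompleteSpace ↥(X ⊔ (ℝ ∙ z) ⊔ (ℝ ∙ u))]
    (hy : resid X y ≠ 0) (hd : resid X d ≠ 0) (hz : resid X z ≠ 0) (hu : resid X u ≠ 0)
    (hdz : ⟪resid X d, resid X z⟫ ≠ 0)
    (hd2 : resid (X ⊔ (ℝ ∙ z)) d ≠ 0) (hu2 : resid (X ⊔ (ℝ ∙ z)) u ≠ 0)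
    (hy3 : resid (X ⊔ (ℝ ∙ d)) y ≠ 0) (hz3 : resid (X ⊔ (ℝ ∙ d)) z ≠ 0)
    (hy4 : resid (X ⊔ (ℝ ∙ z) ⊔ (ℝ ∙ d)) y ≠ 0) (hu4 : resid (X ⊔ (ℝ ∙ z) ⊔ (ℝ ∙ d)) u ≠ 0)
    (hy5 : resid (X ⊔ (ℝ ∙ u) ⊔ (ℝ ∙ d)) y ≠ 0) (hz5 : resid (X ⊔ (ℝ ∙ u) ⊔ (ℝ ∙ d)) z ≠ 0)
    (hd6 : resid (X ⊔ (ℝ ∙ z) ⊔ (ℝ ∙ u)) d ≠ 0)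
    (hexo : Rp z u X = 0)
    (hexcl : Rp y z (X ⊔ (ℝ ∙ u) ⊔ (ℝ ∙ d)) = 0) :
    fp d u (X ⊔ (ℝ ∙ z)) * Rp y u (X ⊔ (ℝ ∙ z) ⊔ (ℝ ∙ d)) =
        -(fp y z (X ⊔ (ℝ ∙ d)) / Rp d z X) ∧
    betaReg y d (X ⊔ (ℝ ∙ z) ⊔ (ℝ ∙ u)) =
        ⟪resid X y, resid X z⟫ / ⟪resid X d, resid X z⟫ := by
  haveI i1 : HasOrthogonalProjection (X ⊔ (ℝ ∙ d) ⊔ (ℝ ∙ u)) := by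
    rw [sup_right_comm]; infer_instance
  haveI i2 : HasOrthogonalProjection (X ⊔ (ℝ ∙ d) ⊔ (ℝ ∙ z)) := by
    rw [sup_right_comm]; infer_instance
  set a := resid X y with ha
  set b := resid X d with hbv
  set c := resid X z with hcv
  set e := resid X u with hev
  have hna : (0:ℝ) < ‖a‖ := norm_pos_iff.2 hy
  have hnb : (0:ℝ) < ‖b‖ := norm_pos_iff.2 hd
  have hnc : (0:ℝ) < ‖c‖ := norm_pos_iff.2 hz
  have hne : (0:ℝ) < ‖e‖ := norm_pos_iff.2 hu
  -- exogeneity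
  have hce : ⟪c, e⟫ = 0 := by
    rw [Rp] at hexo
    rcases div_eq_zero_iff.1 hexo with h | h
    · exact h
    · exact absurd h (by positivity)
  have hec : ⟪e, c⟫ = 0 := by rw [real_inner_comm]; exact hce
  -- level-1 residuals (onto X ⊔ span z)
  have hrd1 : resid (X ⊔ (ℝ ∙ z)) d = b - (⟪b, c⟫ / ‖c‖ ^ 2) • c := resid_sup_span X z hz d
  have hry1 : resid (X ⊔ (ℝ ∙ z)) y = a - (⟪a, c⟫ / ‖c‖ ^ 2) • c := resid_sup_span X z hz y
  have hru1 : resid (X ⊔ (ℝ ∙ z)) u = e := by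
    rw [resid_sup_span X z hz u, ← hev, ← hcv, hec]
    simp
  set d1 : H := b - (⟪b, c⟫ / ‖c‖ ^ 2) • c with hd1def
  set y1 : H := a - (⟪a, c⟫ / ‖c‖ ^ 2) • c with hy1def
  have hd1ne : d1 ≠ 0 := by rw [← hrd1]; exact hd2
  have hnd1 : (0:ℝ) < ‖d1‖ := norm_pos_iff.2 hd1ne
  -- level-3 residuals (onto X ⊔ span d)
  have hry3 : resid (X ⊔ (ℝ ∙ d)) y = a - (⟪a, b⟫ / ‖b‖ ^ 2) • b := resid_sup_span X d hd y
  have hrz3 : resid (X ⊔ (ℝ ∙ d)) z = c - (⟪c, b⟫ / ‖b‖ ^ 2) • b := resid_sup_span X d hd z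
  have hru3 : resid (X ⊔ (ℝ ∙ d)) u = e - (⟪e, b⟫ / ‖b‖ ^ 2) • b := resid_sup_span X d hd u
  set y3 : H := a - (⟪a, b⟫ / ‖b‖ ^ 2) • b with hy3def
  set z3 : H := c - (⟪c, b⟫ / ‖b‖ ^ 2) • b with hz3def
  set u3 : H := e - (⟪e, b⟫ / ‖b‖ ^ 2) • b with hu3def
  have hz3ne : z3 ≠ 0 := by rw [← hrz3]; exact hz3
  have hnz3 : (0:ℝ) < ‖z3‖ := norm_pos_iff.2 hz3ne
  have hu3ne : u3 ≠ 0 := by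
    rw [← hru3]
    intro h0
    apply hu4
    have h1 : resid (X ⊔ (ℝ ∙ d) ⊔ (ℝ ∙ z)) u = 0 := resid_eq_zero_mono le_sup_left h0
    exact (resid_congr (sup_right_comm X (ℝ ∙ z) (ℝ ∙ d)) u).trans h1
  have hnu3 : (0:ℝ) < ‖u3‖ := norm_pos_iff.2 hu3ne
  -- scalar values of level-3 inner products
  have T1 : ⟪y3, z3⟫ = ⟪a, c⟫ - ⟪a, b⟫ * ⟪b, c⟫ / ‖b‖ ^ 2 := by
    rw [hy3def, hz3def, inner_proj_sub a c b (norm_pos_iff.1 hnb), real_inner_comm c b]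
  have T2 : ⟪y3, u3⟫ = ⟪a, e⟫ - ⟪a, b⟫ * ⟪b, e⟫ / ‖b‖ ^ 2 := by
    rw [hy3def, hu3def, inner_proj_sub a e b (norm_pos_iff.1 hnb), real_inner_comm e b]
  have T3 : ⟪z3, u3⟫ = -(⟪b, c⟫ * ⟪b, e⟫ / ‖b‖ ^ 2) := by
    rw [hz3def, hu3def, inner_proj_sub c e b (norm_pos_iff.1 hnb), real_inner_comm c b,
      real_inner_comm e b, hce]
    ring
  have T4 : ‖u3‖ ^ 2 = ‖e‖ ^ 2 - ⟪b, e⟫ ^ 2 / ‖b‖ ^ 2 := by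
    rw [← real_inner_self_eq_norm_sq, hu3def, inner_proj_sub e e b (norm_pos_iff.1 hnb),
      real_inner_self_eq_norm_sq, real_inner_comm e b, ← pow_two]
  have hu3pos : (0:ℝ) < ‖e‖ ^ 2 - ⟪b, e⟫ ^ 2 / ‖b‖ ^ 2 := by
    rw [← T4]; positivity
  -- exclusion: scalar form
  have hexnum : ⟪resid (X ⊔ (ℝ ∙ u) ⊔ (ℝ ∙ d)) y, resid (X ⊔ (ℝ ∙ u) ⊔ (ℝ ∙ d)) z⟫ = 0 := by
    rw [Rp] at hexcl
    rcases div_eq_zero_iff.1 hexcl with h | h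
    · exact h
    · exfalso
      have h1 : (0:ℝ) < ‖resid (X ⊔ (ℝ ∙ u) ⊔ (ℝ ∙ d)) y‖ := norm_pos_iff.2 hy5
      have h2 : (0:ℝ) < ‖resid (X ⊔ (ℝ ∙ u) ⊔ (ℝ ∙ d)) z‖ := norm_pos_iff.2 hz5
      exact absurd h (by positivity)
  have hry5 : resid (X ⊔ (ℝ ∙ u) ⊔ (ℝ ∙ d)) y = y3 - (⟪y3, u3⟫ / ‖u3‖ ^ 2) • u3 := by
    rw [resid_congr (sup_right_comm X (ℝ ∙ u) (ℝ ∙ d)) y,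
      resid_sup_span (X ⊔ (ℝ ∙ d)) u (hru3 ▸ hu3ne) y, hry3, hru3]
  have hrz5 : resid (X ⊔ (ℝ ∙ u) ⊔ (ℝ ∙ d)) z = z3 - (⟪z3, u3⟫ / ‖u3‖ ^ 2) • u3 := by
    rw [resid_congr (sup_right_comm X (ℝ ∙ u) (ℝ ∙ d)) z,
      resid_sup_span (X ⊔ (ℝ ∙ d)) u (hru3 ▸ hu3ne) z, hrz3, hru3]
  rw [hry5, hrz5, inner_proj_sub y3 z3 u3 hu3ne, T1, T2, T3, T4] at hexnum
  have hEX' : ⟪a, c⟫ * (‖b‖ ^ 2 * ‖e‖ ^ 2 - ⟪b, e⟫ ^ 2)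
      = ⟪b, c⟫ * (⟪a, b⟫ * ‖e‖ ^ 2 - ⟪a, e⟫ * ⟪b, e⟫) :=
    alg_excl ⟪a, b⟫ ⟪a, c⟫ ⟪a, e⟫ (‖b‖ ^ 2) ⟪b, c⟫ ⟪b, e⟫ (‖e‖ ^ 2)
      (by positivity) hu3pos.ne' hexnum
  -- common scalar facts
  have S2 : ‖d1‖ ^ 2 = ‖b‖ ^ 2 - ⟪b, c⟫ ^ 2 / ‖c‖ ^ 2 := by
    rw [← real_inner_self_eq_norm_sq, hd1def, inner_proj_sub b b c (norm_pos_iff.1 hnc),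
      real_inner_self_eq_norm_sq, ← pow_two]
  have S3 : ‖z3‖ ^ 2 = ‖c‖ ^ 2 - ⟪b, c⟫ ^ 2 / ‖b‖ ^ 2 := by
    rw [← real_inner_self_eq_norm_sq, hz3def, inner_proj_sub c c b (norm_pos_iff.1 hnb),
      real_inner_self_eq_norm_sq, real_inner_comm c b, ← pow_two]
  have Sd1e : ⟪d1, e⟫ = ⟪b, e⟫ := by
    rw [hd1def, inner_sub_left, inner_smul_left, hce]
    simp
  have Sed1 : ⟪e, d1⟫ = ⟪b, e⟫ := by rw [real_inner_comm]; exact Sd1e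
  have Sy1e : ⟪y1, e⟫ = ⟪a, e⟫ := by
    rw [hy1def, inner_sub_left, inner_smul_left, hce]
    simp
  have Sy1d1 : ⟪y1, d1⟫ = ⟪a, b⟫ - ⟪a, c⟫ * ⟪b, c⟫ / ‖c‖ ^ 2 := by
    rw [hy1def, hd1def, inner_proj_sub a b c (norm_pos_iff.1 hnc)]
  constructor
  · -- first goal
    have hru2 : resid (X ⊔ (ℝ ∙ z) ⊔ (ℝ ∙ d)) u = e - (⟪e, d1⟫ / ‖d1‖ ^ 2) • d1 := by
      rw [resid_sup_span (X ⊔ (ℝ ∙ z)) d hd2 u, hru1, hrd1]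
    have hry2 : resid (X ⊔ (ℝ ∙ z) ⊔ (ℝ ∙ d)) y = y1 - (⟪y1, d1⟫ / ‖d1‖ ^ 2) • d1 := by
      rw [resid_sup_span (X ⊔ (ℝ ∙ z)) d hd2 y, hry1, hrd1]
    set u2 : H := e - (⟪e, d1⟫ / ‖d1‖ ^ 2) • d1 with hu2def
    set y2 : H := y1 - (⟪y1, d1⟫ / ‖d1‖ ^ 2) • d1 with hy2def
    have hu2ne : u2 ≠ 0 := by rw [← hru2]; exact hu4
    have hy2ne : y2 ≠ 0 := by rw [← hry2]; exact hy4
    have hnu2 : (0:ℝ) < ‖u2‖ := norm_pos_iff.2 hu2ne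
    have hny2 : (0:ℝ) < ‖y2‖ := norm_pos_iff.2 hy2ne
    have hy4' : resid (X ⊔ (ℝ ∙ d) ⊔ (ℝ ∙ z)) y ≠ 0 := by
      rw [resid_congr (sup_right_comm X (ℝ ∙ d) (ℝ ∙ z)) y]
      exact hy4
    have e1 : fp d u (X ⊔ (ℝ ∙ z)) = ⟪resid (X ⊔ (ℝ ∙ z)) d, resid (X ⊔ (ℝ ∙ z)) u⟫
        / (‖resid (X ⊔ (ℝ ∙ z)) d‖ * ‖resid (X ⊔ (ℝ ∙ z) ⊔ (ℝ ∙ d)) u‖) :=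
      fp_eq d u (X ⊔ (ℝ ∙ z)) hd2 hu2 hu4
    have e2 : fp y z (X ⊔ (ℝ ∙ d)) = ⟪resid (X ⊔ (ℝ ∙ d)) z, resid (X ⊔ (ℝ ∙ d)) y⟫
        / (‖resid (X ⊔ (ℝ ∙ d)) z‖ * ‖resid (X ⊔ (ℝ ∙ d) ⊔ (ℝ ∙ z)) y‖) := by
      rw [fp, Rp_comm, ← fp]
      exact fp_eq z y (X ⊔ (ℝ ∙ d)) hz3 hy3 hy4'
    have e3 : resid (X ⊔ (ℝ ∙ d) ⊔ (ℝ ∙ z)) y = resid (X ⊔ (ℝ ∙ z) ⊔ (ℝ ∙ d)) y :=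
      resid_congr (sup_right_comm X (ℝ ∙ d) (ℝ ∙ z)) y
    rw [e1, e2, e3, Rp, Rp, ← hbv, ← hcv, hrd1, hru1, hru2, hry2, hrz3, hry3]
    -- remaining scalar computations
    have S4 : ‖u2‖ ^ 2 = ‖e‖ ^ 2 - ⟪b, e⟫ ^ 2 / (‖b‖ ^ 2 - ⟪b, c⟫ ^ 2 / ‖c‖ ^ 2) := by
      rw [← real_inner_self_eq_norm_sq, hu2def, inner_proj_sub e e d1 hd1ne,
        real_inner_self_eq_norm_sq, Sed1, ← pow_two, S2]
    have S5 : ⟪y2, u2⟫ = ⟪a, e⟫ - (⟪a, b⟫ - ⟪a, c⟫ * ⟪b, c⟫ / ‖c‖ ^ 2) * ⟪b, e⟫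
        / (‖b‖ ^ 2 - ⟪b, c⟫ ^ 2 / ‖c‖ ^ 2) := by
      rw [hy2def, hu2def, inner_proj_sub y1 e d1 hd1ne, Sy1e, Sy1d1, Sed1, S2]
    have S6 : ⟪z3, y3⟫ = ⟪a, c⟫ - ⟪a, b⟫ * ⟪b, c⟫ / ‖b‖ ^ 2 := by
      rw [real_inner_comm]; exact T1
    rw [Sd1e, S6]
    exact alg1 ⟪a, b⟫ ⟪a, c⟫ ⟪a, e⟫ (‖b‖ ^ 2) ⟪b, c⟫ ⟪b, e⟫ (‖c‖ ^ 2) (‖e‖ ^ 2)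
      ‖b‖ ‖c‖ ‖d1‖ ‖z3‖ ‖u2‖ ‖y2‖ ⟪y2, u2⟫
      hnb hnc hnd1 hnz3 hnu2 hny2 rfl rfl (by positivity) S2 S3 S4 hdz S5 hEX'
  · -- second goal
    have hry6 : resid (X ⊔ (ℝ ∙ z) ⊔ (ℝ ∙ u)) y = y1 - (⟪y1, e⟫ / ‖e‖ ^ 2) • e := by
      rw [resid_sup_span (X ⊔ (ℝ ∙ z)) u hu2 y, hry1, hru1]
    have hrd6 : resid (X ⊔ (ℝ ∙ z) ⊔ (ℝ ∙ u)) d = d1 - (⟪d1, e⟫ / ‖e‖ ^ 2) • e := by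
      rw [resid_sup_span (X ⊔ (ℝ ∙ z)) u hu2 d, hrd1, hru1]
    have hd6ne : d1 - (⟪d1, e⟫ / ‖e‖ ^ 2) • e ≠ 0 := by rw [← hrd6]; exact hd6
    have N1 : ⟪y1 - (⟪y1, e⟫ / ‖e‖ ^ 2) • e, d1 - (⟪d1, e⟫ / ‖e‖ ^ 2) • e⟫
        = ⟪a, b⟫ - ⟪a, c⟫ * ⟪b, c⟫ / ‖c‖ ^ 2 - ⟪a, e⟫ * ⟪b, e⟫ / ‖e‖ ^ 2 := by
      rw [inner_proj_sub y1 d1 e (norm_pos_iff.1 hne), Sy1d1, Sy1e, Sd1e]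
    have N2 : ‖d1 - (⟪d1, e⟫ / ‖e‖ ^ 2) • e‖ ^ 2
        = ‖b‖ ^ 2 - ⟪b, c⟫ ^ 2 / ‖c‖ ^ 2 - ⟪b, e⟫ ^ 2 / ‖e‖ ^ 2 := by
      rw [← real_inner_self_eq_norm_sq, inner_proj_sub d1 d1 e (norm_pos_iff.1 hne),
        real_inner_self_eq_norm_sq, Sd1e, ← pow_two, S2]
    have hdenpos : (0:ℝ) < ‖b‖ ^ 2 - ⟪b, c⟫ ^ 2 / ‖c‖ ^ 2 - ⟪b, e⟫ ^ 2 / ‖e‖ ^ 2 := by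
      rw [← N2]
      have := norm_pos_iff.2 hd6ne
      positivity
    rw [betaReg, hry6, hrd6, N1, N2]
    exact alg2 ⟪a, b⟫ ⟪a, c⟫ ⟪a, e⟫ (‖b‖ ^ 2) ⟪b, c⟫ ⟪b, e⟫ (‖c‖ ^ 2) (‖e‖ ^ 2)
      (by positivity) (by positivity) hdz hdenpos.ne' hEX'
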